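/- Let h : ℝ → ℝ be given by h(x) = -x², let c ≠ 0 be a real constant, and consider the dynamics ẋ = c. Then: (i) for every extended class K function α and every x ∈ ℝ with h(x) ≥ 0, the barrier condition h'(x)·c ≥ -α(h(x)) holds; yet (ii) the solution x(t) = c·t of ẋ = c with x(0) = 0 (so x(0) ∈ C = {x : h(x) ≥ 0}) satisfies h(x(t)) < 0 for every t ≠ 0. Hence the zero-sublevel barrier condition on C does not render the set C = {x : h(x) ≥ 0} forward invariant when Int(C) = {x : h(x) > 0} is empty. -/

import Mathlib

/-- Counterexample (Remark 3, first part): for `h x = -x²` and the dynamics `ẋ = c` with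
`c ≠ 0`, the barrier condition `h'(x)·c ≥ -α(h x)` holds on `C = {x : h x ≥ 0}` for every
extended class K function `α`, yet the solution `x t = c·t` starting at `x(0) = 0 ∈ C`
leaves `C` immediately: `h (x t) < 0` for every `t ≠ 0`. -/
theorem cbf_condition_does_not_give_invariance_of_C
    (c : ℝ) (hc : c ≠ 0) (h : ℝ → ℝ) (hh : h = fun x => -x ^ 2) :
    (∀ α : ℝ → ℝ, StrictMono α → α 0 = 0 →
      ∀ x : ℝ, 0 ≤ h x → deriv h x * c ≥ -α (h x)) ∧
    (∀ t : ℝ, t ≠ 0 → h (c * t) < 0) := by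
  subst hh
  constructor
  · intro α _ hα0 x hx
    simp only at hx
    have hx0 : x = 0 := by nlinarith [sq_nonneg x]
    subst hx0
    have : deriv (fun x : ℝ => -x ^ 2) 0 = 0 := by
      have : (fun x : ℝ => -x ^ 2) = fun x => -(x ^ 2) := rfl
      rw [this, deriv.fun_neg, deriv_pow_field]
      simp
    rw [this]
    simp [hα0]
  · intro t ht
    have : c * t ≠ 0 := mul_ne_zero hc ht
    simp only
    nlinarith [pow_pos (abs_pos.mpr this) 2, sq_abs (c*t)]
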